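/- arXiv:1101.3441 — 4 statements merged into one kernel-verified Lean document; each statement's English description precedes it below -/
import Mathlib

section
/- Let the map Λ : ZC₃^{1+} → C₂^{1+} satisfy δΛ = Id on ZC₃^{1+} and Λδ = Id on C₂^{1+}. Then for any g ∈ C₂(V) with δg ∈ C₃^{1+}, setting δf := (Id − Λδ)g, one has (δf)_{st} = lim_{|Π_{st}|→0} Σ_{i=0}^{n−1} g_{t_i t_{i+1}}, the limit being over partitions Π_{st} = {s = t₀ < ⋯ < t_n = t} of [s,t] with mesh tending to zero. -/

lemma tele_sum {E : Type*} [AddCommGroup E] (h : ℝ → ℝ → E)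
    (A : Set ℝ) (hadd : ∀ a b c, a ∈ A → b ∈ A → c ∈ A → h a c = h a b + h b c) :
    ∀ (n : ℕ) (π : Fin (n+1) → ℝ), (∀ i, π i ∈ A) →
      ∑ i : Fin n, h (π i.castSucc) (π i.succ) = h (π 0) (π (Fin.last n)) := by
  intro n
  induction n with
  | zero =>
    intro π hπ
    have h0 := hadd (π 0) (π 0) (π 0) (hπ 0) (hπ 0) (hπ 0)
    have hz : h (π 0) (π 0) = 0 := add_eq_left.mp h0.symm
    simp [Fin.last, hz]
  | succ n ih =>
    intro π hπ
    rw [Fin.sum_univ_castSucc]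
    have hih := ih (π ∘ Fin.castSucc) (fun i => hπ _)
    simp only [Function.comp] at hih
    simp only [Fin.succ_castSucc] at hih ⊢
    rw [hih]
    have := hadd (π 0) (π (Fin.last n).castSucc) (π (Fin.last (n+1)))
      (hπ 0) (hπ _) (hπ _)
    rw [show (Fin.last n).succ = Fin.last (n+1) from rfl] at *
    rw [show π (Fin.castSucc 0) = π 0 from rfl]
    exact this.symm

lemma pow_bound {x η μ : ℝ} (hx : 0 ≤ x) (hxη : x ≤ η) (hμ : 1 < μ) :
    x ^ μ ≤ η ^ (μ - 1) * x := by
  rcases eq_or_lt_of_le hx with h0 | h0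
  · rw [← h0, Real.zero_rpow (by linarith), mul_zero]
  · have hxx : x ^ μ = x ^ (μ - 1) * x := by
      rw [← Real.rpow_add_one (ne_of_gt h0) (μ-1)]; ring_nf
    rw [hxx]
    have := Real.rpow_le_rpow hx hxη (by linarith : (0:ℝ) ≤ μ - 1)
    nlinarith

/-- Riemann-sum representation of the sewing construction: if `g ∈ C₂(V)` with
`δg ∈ C₃^{1+}`, and `L = Λ(δg)` (so that `δL = δg` and `L ∈ C₂^{1+}`), then the
increment `δf := g − Λδg` satisfies
`(δf)_{st} = lim_{|Π|→0} ∑_i g_{tᵢ t_{i+1}}` over partitions of `[s,t]`. -/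
theorem stmt5 {E : Type*} [NormedAddCommGroup E] [NormedSpace ℝ E]
    (T : ℝ) (hT : 0 < T) (g L : ℝ → ℝ → E)
    -- δg ∈ C₃^{1+}
    (hδg : ∃ μ > (1 : ℝ), ∃ C : ℝ, ∀ s u t : ℝ,
      s ∈ Set.Icc 0 T → u ∈ Set.Icc 0 T → t ∈ Set.Icc 0 T → s ≤ u → u ≤ t →
      ‖g s t - g s u - g u t‖ ≤ C * (t - s) ^ μ)
    -- L = Λ(δg) belongs to C₂^{1+}
    (hL : ∃ μ > (1 : ℝ), ∃ C : ℝ, ∀ s t : ℝ,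
      s ∈ Set.Icc 0 T → t ∈ Set.Icc 0 T → s ≤ t → ‖L s t‖ ≤ C * (t - s) ^ μ)
    -- δ(Λδg) = δg
    (hδL : ∀ s u t : ℝ, s ∈ Set.Icc 0 T → u ∈ Set.Icc 0 T → t ∈ Set.Icc 0 T →
      L s t - L s u - L u t = g s t - g s u - g u t)
    (s t : ℝ) (hs : s ∈ Set.Icc (0 : ℝ) T) (ht : t ∈ Set.Icc (0 : ℝ) T)
    (hst : s ≤ t) :
    ∀ ε > (0 : ℝ), ∃ η > (0 : ℝ), ∀ (n : ℕ) (π : Fin (n + 1) → ℝ),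
      Monotone π → π 0 = s → π (Fin.last n) = t →
      (∀ i : Fin n, π i.succ - π i.castSucc < η) →
      ‖(∑ i : Fin n, g (π i.castSucc) (π i.succ)) - (g s t - L s t)‖ < ε := by
  obtain ⟨μ, hμ, C, hLb⟩ := hL
  -- C ≥ 0
  have hC : 0 ≤ C := by
    have h1 : ‖L 0 T‖ ≤ C * (T - 0) ^ μ :=
      hLb 0 T ⟨le_refl _, le_of_lt hT⟩ ⟨le_of_lt hT, le_refl _⟩ (le_of_lt hT)
    have h2 : (0:ℝ) < (T - 0) ^ μ := Real.rpow_pos_of_pos (by linarith) μ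
    nlinarith [norm_nonneg (L 0 T)]
  intro ε hε
  set D : ℝ := C * (t - s) + 1 with hD
  have hD0 : 0 < D := by nlinarith
  refine ⟨min 1 ((ε / D) ^ (1 / (μ - 1))), lt_min one_pos
    (Real.rpow_pos_of_pos (div_pos hε hD0) _), ?_⟩
  set η : ℝ := min 1 ((ε / D) ^ (1 / (μ - 1))) with hηdef
  have hη0 : 0 < η := lt_min one_pos (Real.rpow_pos_of_pos (div_pos hε hD0) _)
  have hημ : η ^ (μ - 1) ≤ ε / D := by
    have h1 : η ^ (μ - 1) ≤ ((ε / D) ^ (1 / (μ - 1))) ^ (μ - 1) :=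
      Real.rpow_le_rpow (le_of_lt hη0) (min_le_right _ _) (by linarith)
    have h2 : ((ε / D) ^ (1 / (μ - 1))) ^ (μ - 1) = ε / D := by
      rw [← Real.rpow_mul (le_of_lt (div_pos hε hD0))]
      rw [one_div, inv_mul_cancel₀ (by linarith : μ - 1 ≠ 0), Real.rpow_one]
    linarith
  intro n π hmono h0 hlast hmesh
  -- all partition points lie in [0, T]
  have hπmem : ∀ i, π i ∈ Set.Icc (0:ℝ) T := by
    intro i
    constructor
    · have := hmono (Fin.zero_le i); rw [h0] at this; exact le_trans hs.1 this
    · have := hmono (Fin.le_last i); rw [hlast] at this; exact le_trans this ht.2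
  -- telescoping for g - L
  have htele : ∑ i : Fin n, (g (π i.castSucc) (π i.succ) - L (π i.castSucc) (π i.succ))
      = g s t - L s t := by
    have hadd : ∀ a b c : ℝ, a ∈ Set.Icc (0:ℝ) T → b ∈ Set.Icc (0:ℝ) T →
        c ∈ Set.Icc (0:ℝ) T → (g a c - L a c) = (g a b - L a b) + (g b c - L b c) := by
      intro a b c ha hb hc
      have := hδL a b c ha hb hc
      have h2 : g a c - g a b - g b c - (L a c - L a b - L b c) = 0 := by
        rw [this]; abel
      have : g a c - L a c - ((g a b - L a b) + (g b c - L b c)) = 0 := by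
        rw [← h2]; abel
      linear_combination (norm := abel) this
    have := tele_sum (fun a b => g a b - L a b) (Set.Icc 0 T) hadd n π hπmem
    rw [h0, hlast] at this
    exact this
  -- telescoping for increments
  have hsum : ∑ i : Fin n, (π i.succ - π i.castSucc) = t - s := by
    have := tele_sum (fun a b => b - a) (Set.Icc 0 T)
      (fun a b c _ _ _ => by ring) n π hπmem
    rw [h0, hlast] at this
    exact this
  have hkey : (∑ i : Fin n, g (π i.castSucc) (π i.succ)) - (g s t - L s t)
      = ∑ i : Fin n, L (π i.castSucc) (π i.succ) := by
    rw [← htele, ← Finset.sum_sub_distrib]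
    congr 1; funext i; abel
  rw [hkey]
  calc ‖∑ i : Fin n, L (π i.castSucc) (π i.succ)‖
      ≤ ∑ i : Fin n, ‖L (π i.castSucc) (π i.succ)‖ := norm_sum_le _ _
    _ ≤ ∑ i : Fin n, C * (η ^ (μ - 1) * (π i.succ - π i.castSucc)) := by
        apply Finset.sum_le_sum
        intro i _
        have hle : π i.castSucc ≤ π i.succ := hmono (le_of_lt Fin.castSucc_lt_succ)
        have h1 := hLb (π i.castSucc) (π i.succ) (hπmem _) (hπmem _) hle
        have h2 : (π i.succ - π i.castSucc) ^ μ ≤ η ^ (μ - 1) * (π i.succ - π i.castSucc) :=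
          pow_bound (by linarith) (le_of_lt (hmesh i)) hμ
        calc ‖L (π i.castSucc) (π i.succ)‖ ≤ C * (π i.succ - π i.castSucc) ^ μ := h1
          _ ≤ C * (η ^ (μ - 1) * (π i.succ - π i.castSucc)) :=
              mul_le_mul_of_nonneg_left h2 hC
    _ = C * η ^ (μ - 1) * (t - s) := by
        simp only [← mul_assoc]
        rw [← Finset.mul_sum, hsum]
    _ < ε := by
        have hεD : η ^ (μ - 1) * D ≤ ε := (le_div_iff₀ hD0).mp hημ
        have hηp : 0 < η ^ (μ - 1) := Real.rpow_pos_of_pos hη0 _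
        have hexp : η ^ (μ - 1) * D = C * η ^ (μ - 1) * (t - s) + η ^ (μ - 1) := by
          rw [hD]; ring
        linarith
end

section
/- Let x be γ-Hölder with γ > 1/3 admitting a Lévy area x² ∈ C₂^{2γ} with δx² = x¹ ⊗ x¹, and let f ∈ C_b²(ℝ^d). Then z = f(x) is a weakly controlled path: (δz)_{st} = Σᵢ ∂ᵢf(x_s) x¹_{st}(i) + r_{st} with ζ_s(i) = ∂ᵢf(x_s) ∈ C₁^γ and remainder r ∈ C₂^{2γ}, and moreover N[z; Q_{γ,a}] ≤ c_{f,T}(1 + N[x; C₁^γ(ℝ^d)]²). -/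
open Set

noncomputable section

/-- γ-Hölder seminorm of a path on `[0,T]`. -/
def hol1 {α : Type*} [NormedAddCommGroup α] (T μ : ℝ) (u : ℝ → α) : ℝ :=
  sSup {c | ∃ s ∈ Icc (0 : ℝ) T, ∃ t ∈ Icc (0 : ℝ) T, s ≠ t ∧
    c = ‖u t - u s‖ / |t - s| ^ μ}

/-- μ-Hölder norm of a 1-increment on `[0,T]`. -/
def hol2 (T μ : ℝ) (r : ℝ → ℝ → ℝ) : ℝ :=
  sSup {c | ∃ s ∈ Icc (0 : ℝ) T, ∃ t ∈ Icc (0 : ℝ) T, s ≠ t ∧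
    c = |r s t| / |t - s| ^ μ}

/-- sup norm of a path on `[0,T]`. -/
def sup1 {α : Type*} [NormedAddCommGroup α] (T : ℝ) (u : ℝ → α) : ℝ :=
  sSup {c | ∃ s ∈ Icc (0 : ℝ) T, c = ‖u s‖}

/-- A linear functional applied to a vector expands along the coordinates. -/
lemma apply_eq_sum (d : ℕ) (v : EuclideanSpace ℝ (Fin d))
    (L : EuclideanSpace ℝ (Fin d) →L[ℝ] ℝ) :
    L v = ∑ i, v i * L (EuclideanSpace.single i 1) := by
  conv_lhs => rw [← (EuclideanSpace.basisFun (Fin d) ℝ).sum_repr v]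
  rw [map_sum]
  simp [EuclideanSpace.basisFun_repr, EuclideanSpace.basisFun_apply, mul_comm]

/-- The coordinate vector of a linear functional has norm at most the operator norm. -/
lemma vec_norm_le (d : ℕ) (L : EuclideanSpace ℝ (Fin d) →L[ℝ] ℝ)
    (v : EuclideanSpace ℝ (Fin d)) (hv : ∀ i, v i = L (EuclideanSpace.single i 1)) :
    ‖v‖ ≤ ‖L‖ := by
  have h : v = (InnerProductSpace.toDual ℝ (EuclideanSpace ℝ (Fin d))).symm L := by
    ext i
    have := @InnerProductSpace.toDual_symm_apply ℝ _ _ _ _ _ (EuclideanSpace.single i 1) L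
    rw [EuclideanSpace.inner_single_right] at this
    simp only [map_one, RCLike.star_def, starRingEnd_apply, star_trivial, one_mul] at this
    rw [hv i, ← this]
  rw [h]
  exact ((InnerProductSpace.toDual ℝ (EuclideanSpace ℝ (Fin d))).symm.norm_map L).le

/-- If `x` is γ-Hölder (1/3 < γ ≤ 1/2) admitting a Lévy area and `f ∈ C_b²(ℝ^d)`,
then `z = f(x)` is weakly controlled: `(δz)_{st} = ∑ᵢ ∂ᵢf(x_s) x¹_{st}(i) + r_{st}`
with `ζ = ∇f(x) ∈ C₁^γ`, `r ∈ C₂^{2γ}`, and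
`N[z; Q_{γ,a}] ≤ c_{f,T} (1 + N[x; C₁^γ]²)`. -/
theorem stmt7 (d : ℕ) (T γ : ℝ) (hT : 0 < T) (hγ1 : 1 / 3 < γ) (hγ2 : γ ≤ 1 / 2)
    (f : EuclideanSpace ℝ (Fin d) → ℝ) (hf : ContDiff ℝ 2 f)
    (hfb : ∃ M : ℝ, ∀ k ≤ 2, ∀ y, ‖iteratedFDeriv ℝ k f y‖ ≤ M) :
    ∃ c : ℝ, ∀ (x : ℝ → EuclideanSpace ℝ (Fin d))
      (x2 : ℝ → ℝ → Fin d → Fin d → ℝ),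
      -- x is γ-Hölder
      (∃ Cx : ℝ, ∀ s ∈ Icc (0 : ℝ) T, ∀ t ∈ Icc (0 : ℝ) T,
        ‖x t - x s‖ ≤ Cx * |t - s| ^ γ) →
      -- the Lévy area x² is 2γ-Hölder
      (∃ C2 : ℝ, ∀ s ∈ Icc (0 : ℝ) T, ∀ t ∈ Icc (0 : ℝ) T, ∀ i j,
        |x2 s t i j| ≤ C2 * |t - s| ^ (2 * γ)) →
      -- δx² = x¹ ⊗ x¹
      (∀ s ∈ Icc (0 : ℝ) T, ∀ u ∈ Icc (0 : ℝ) T, ∀ t ∈ Icc (0 : ℝ) T, ∀ i j,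
        x2 s t i j - x2 s u i j - x2 u t i j = (x u i - x s i) * (x t j - x u j)) →
      -- conclusions, with ζ_s(i) = ∂ᵢ f(x_s) and r the remainder of the decomposition
      (let ζ : ℝ → EuclideanSpace ℝ (Fin d) :=
        fun s => WithLp.toLp 2 (fun i => fderiv ℝ f (x s) (EuclideanSpace.single i 1));
       let r : ℝ → ℝ → ℝ := fun s t => f (x t) - f (x s) -
         ∑ i, fderiv ℝ f (x s) (EuclideanSpace.single i 1) * (x t i - x s i);
       -- decomposition δ(f ∘ x) = ζ·x¹ + r
       (∀ s t : ℝ, f (x t) - f (x s)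
          = (∑ i, ζ s i * (x t i - x s i)) + r s t) ∧
       -- ζ ∈ C₁^γ
       (∃ Cζ : ℝ, ∀ s ∈ Icc (0 : ℝ) T, ∀ t ∈ Icc (0 : ℝ) T,
          ‖ζ t - ζ s‖ ≤ Cζ * |t - s| ^ γ) ∧
       -- r ∈ C₂^{2γ}
       (∃ Cr : ℝ, ∀ s ∈ Icc (0 : ℝ) T, ∀ t ∈ Icc (0 : ℝ) T,
          |r s t| ≤ Cr * |t - s| ^ (2 * γ)) ∧
       -- seminorm estimate N[z; Q_{γ,a}] ≤ c_{f,T} (1 + N[x; C₁^γ]²)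
       hol1 T γ (fun s => f (x s)) + sup1 T ζ + hol1 T γ ζ + hol2 T (2 * γ) r
         ≤ c * (1 + (hol1 T γ x) ^ 2)) := by
  classical
  obtain ⟨M, hM⟩ := hfb
  have hM0 : 0 ≤ M := le_trans (norm_nonneg _) (hM 0 (by norm_num) 0)
  have hγ0 : 0 < γ := lt_trans (by norm_num) hγ1
  -- bounds on derivatives
  have hDf : ∀ y, ‖fderiv ℝ f y‖ ≤ M := by
    intro y
    have h1 := hM 1 (by norm_num) y
    rwa [← norm_iteratedFDeriv_fderiv (n := 0), norm_iteratedFDeriv_zero] at h1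
  have hD2f : ∀ y, ‖fderiv ℝ (fderiv ℝ f) y‖ ≤ M := by
    intro y
    have h1 := hM 2 (by norm_num) y
    rwa [← norm_iteratedFDeriv_fderiv (n := 1),
      ← norm_iteratedFDeriv_fderiv (n := 0), norm_iteratedFDeriv_zero] at h1
  have hfdiff : Differentiable ℝ f := hf.differentiable (by norm_num)
  have hDfc : ContDiff ℝ 1 (fderiv ℝ f) := hf.fderiv_right (by norm_num)
  have hDfdiff : Differentiable ℝ (fderiv ℝ f) := hDfc.differentiable (by norm_num)
  -- f is M-Lipschitz
  have lip_f : ∀ a b, |f b - f a| ≤ M * ‖b - a‖ := by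
    intro a b
    have := Convex.norm_image_sub_le_of_norm_fderiv_le (f := f)
      (fun y _ => hfdiff y) (fun y _ => hDf y) convex_univ (mem_univ a) (mem_univ b)
    simpa [Real.norm_eq_abs] using this
  -- fderiv f is M-Lipschitz
  have lip_Df : ∀ a b, ‖fderiv ℝ f b - fderiv ℝ f a‖ ≤ M * ‖b - a‖ := by
    intro a b
    exact Convex.norm_image_sub_le_of_norm_fderiv_le (f := fderiv ℝ f)
      (fun y _ => hDfdiff y) (fun y _ => hD2f y) convex_univ (mem_univ a) (mem_univ b)
  -- Taylor remainder estimate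
  have taylor : ∀ a b, |f b - f a - fderiv ℝ f a (b - a)| ≤ M * ‖b - a‖ * ‖b - a‖ := by
    intro a b
    have hamem : a ∈ Metric.closedBall a ‖b - a‖ := Metric.mem_closedBall_self (norm_nonneg _)
    have hbmem : b ∈ Metric.closedBall a ‖b - a‖ := by
      rw [Metric.mem_closedBall, dist_eq_norm]
    have hbound : ∀ y ∈ Metric.closedBall a ‖b - a‖,
        ‖fderiv ℝ f y - fderiv ℝ f a‖ ≤ M * ‖b - a‖ := by
      intro y hy
      have h1 := lip_Df a y
      have h2 : ‖y - a‖ ≤ ‖b - a‖ := by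
        rw [Metric.mem_closedBall, dist_eq_norm] at hy
        exact hy
      calc ‖fderiv ℝ f y - fderiv ℝ f a‖ ≤ M * ‖y - a‖ := h1
        _ ≤ M * ‖b - a‖ := by nlinarith [norm_nonneg (y - a)]
    have := Convex.norm_image_sub_le_of_norm_fderiv_le' (f := f) (φ := fderiv ℝ f a)
      (x := a) (y := b)
      (fun y _ => hfdiff y) hbound (convex_closedBall _ _) hamem hbmem
    simpa [Real.norm_eq_abs] using this
  refine ⟨2 * M, ?_⟩
  intro x x2 hx _ _
  obtain ⟨Cx, hCx⟩ := hx
  intro ζ r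
  -- the set of ratios for x is bounded above
  have hbdd : BddAbove {c | ∃ s ∈ Icc (0 : ℝ) T, ∃ t ∈ Icc (0 : ℝ) T, s ≠ t ∧
      c = ‖x t - x s‖ / |t - s| ^ γ} := by
    refine ⟨max Cx 0, ?_⟩
    rintro c ⟨s, hs, t, ht, hst, rfl⟩
    have hpos : (0 : ℝ) < |t - s| ^ γ :=
      Real.rpow_pos_of_pos (abs_pos.2 (sub_ne_zero.2 (fun h => hst h.symm))) γ
    rw [div_le_iff₀ hpos]
    calc ‖x t - x s‖ ≤ Cx * |t - s| ^ γ := hCx s hs t ht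
      _ ≤ max Cx 0 * |t - s| ^ γ := by
          exact mul_le_mul_of_nonneg_right (le_max_left _ _) hpos.le
  set K := hol1 T γ x with hKdef
  -- K is nonnegative
  have hK0 : 0 ≤ K := by
    have hmem : ‖x T - x 0‖ / |T - 0| ^ γ ∈ {c | ∃ s ∈ Icc (0 : ℝ) T, ∃ t ∈ Icc (0 : ℝ) T,
        s ≠ t ∧ c = ‖x t - x s‖ / |t - s| ^ γ} :=
      ⟨0, ⟨le_refl _, hT.le⟩, T, ⟨hT.le, le_refl _⟩, hT.ne, rfl⟩
    have := le_csSup hbdd hmem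
    have hnn : 0 ≤ ‖x T - x 0‖ / |T - 0| ^ γ :=
      div_nonneg (norm_nonneg _) (Real.rpow_nonneg (abs_nonneg _) _)
    exact le_trans hnn this
  -- the key Hölder estimate with constant K
  have hK : ∀ s ∈ Icc (0 : ℝ) T, ∀ t ∈ Icc (0 : ℝ) T, ‖x t - x s‖ ≤ K * |t - s| ^ γ := by
    intro s hs t ht
    by_cases hst : s = t
    · subst hst
      simp [Real.zero_rpow hγ0.ne']
    · have hpos : (0 : ℝ) < |t - s| ^ γ :=
        Real.rpow_pos_of_pos (abs_pos.2 (sub_ne_zero.2 (fun h => hst h.symm))) γ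
      have hmem : ‖x t - x s‖ / |t - s| ^ γ ∈ {c | ∃ s ∈ Icc (0 : ℝ) T, ∃ t ∈ Icc (0 : ℝ) T,
          s ≠ t ∧ c = ‖x t - x s‖ / |t - s| ^ γ} := ⟨s, hs, t, ht, hst, rfl⟩
      have := le_csSup hbdd hmem
      rw [div_le_iff₀ hpos] at this
      exact this
  -- ζ estimates
  have hζdiff : ∀ s t, ‖ζ t - ζ s‖ ≤ M * ‖x t - x s‖ := by
    intro s t
    have h1 : ‖ζ t - ζ s‖ ≤ ‖fderiv ℝ f (x t) - fderiv ℝ f (x s)‖ :=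
      vec_norm_le d _ _ (fun i => by simp [ζ, ContinuousLinearMap.sub_apply])
    exact le_trans h1 (lip_Df (x s) (x t))
  have hζsup : ∀ t, ‖ζ t‖ ≤ M := fun t =>
    le_trans (vec_norm_le d (fderiv ℝ f (x t)) (ζ t) (fun i => rfl)) (hDf (x t))
  -- remainder estimate
  have hr : ∀ s t, |r s t| ≤ M * ‖x t - x s‖ * ‖x t - x s‖ := by
    intro s t
    have heq : r s t = f (x t) - f (x s) - fderiv ℝ f (x s) (x t - x s) := by
      rw [apply_eq_sum d (x t - x s)]
      simp [r, mul_comm]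
    rw [heq]
    exact taylor (x s) (x t)
  -- discrete decomposition is trivial
  refine ⟨fun s t => by simp [ζ, r], ⟨M * K, ?_⟩, ⟨M * K ^ 2, ?_⟩, ?_⟩
  · intro s hs t ht
    calc ‖ζ t - ζ s‖ ≤ M * ‖x t - x s‖ := hζdiff s t
      _ ≤ M * (K * |t - s| ^ γ) := by
          exact mul_le_mul_of_nonneg_left (hK s hs t ht) hM0
      _ = M * K * |t - s| ^ γ := by ring
  · intro s hs t ht
    have h1 := hr s t
    have h2 := hK s hs t ht
    have h3 : (0 : ℝ) ≤ |t - s| ^ γ := Real.rpow_nonneg (abs_nonneg _) _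
    have hpow : |t - s| ^ (2 * γ) = (|t - s| ^ γ) * (|t - s| ^ γ) := by
      rw [← Real.rpow_add' (abs_nonneg _)]
      · ring_nf
      · positivity
    calc |r s t| ≤ M * ‖x t - x s‖ * ‖x t - x s‖ := h1
      _ ≤ M * (K * |t - s| ^ γ) * (K * |t - s| ^ γ) := by
          have hnn := norm_nonneg (x t - x s)
          have hKp : 0 ≤ K * |t - s| ^ γ := le_trans hnn h2
          have h4 : ‖x t - x s‖ * ‖x t - x s‖ ≤ (K * |t - s| ^ γ) * (K * |t - s| ^ γ) :=
            mul_le_mul h2 h2 hnn hKp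
          calc M * ‖x t - x s‖ * ‖x t - x s‖ = M * (‖x t - x s‖ * ‖x t - x s‖) := by ring
            _ ≤ M * ((K * |t - s| ^ γ) * (K * |t - s| ^ γ)) :=
                mul_le_mul_of_nonneg_left h4 hM0
            _ = M * (K * |t - s| ^ γ) * (K * |t - s| ^ γ) := by ring
      _ = M * K ^ 2 * |t - s| ^ (2 * γ) := by rw [hpow]; ring
  · -- the seminorm bound
    have hA : hol1 T γ (fun s => f (x s)) ≤ M * K := by
      apply Real.sSup_le _ (by positivity)
      rintro c ⟨s, hs, t, ht, hst, rfl⟩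
      have hpos : (0 : ℝ) < |t - s| ^ γ :=
        Real.rpow_pos_of_pos (abs_pos.2 (sub_ne_zero.2 (fun h => hst h.symm))) γ
      rw [div_le_iff₀ hpos]
      calc ‖f (x t) - f (x s)‖ ≤ M * ‖x t - x s‖ := by
            simpa [Real.norm_eq_abs] using lip_f (x s) (x t)
        _ ≤ M * (K * |t - s| ^ γ) := mul_le_mul_of_nonneg_left (hK s hs t ht) hM0
        _ = M * K * |t - s| ^ γ := by ring
    have hB : sup1 T ζ ≤ M := by
      apply Real.sSup_le _ hM0
      rintro c ⟨s, hs, rfl⟩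
      exact hζsup s
    have hC : hol1 T γ ζ ≤ M * K := by
      apply Real.sSup_le _ (by positivity)
      rintro c ⟨s, hs, t, ht, hst, rfl⟩
      have hpos : (0 : ℝ) < |t - s| ^ γ :=
        Real.rpow_pos_of_pos (abs_pos.2 (sub_ne_zero.2 (fun h => hst h.symm))) γ
      rw [div_le_iff₀ hpos]
      calc ‖ζ t - ζ s‖ ≤ M * ‖x t - x s‖ := hζdiff s t
        _ ≤ M * (K * |t - s| ^ γ) := mul_le_mul_of_nonneg_left (hK s hs t ht) hM0
        _ = M * K * |t - s| ^ γ := by ring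
    have hD : hol2 T (2 * γ) r ≤ M * K ^ 2 := by
      apply Real.sSup_le _ (by positivity)
      rintro c ⟨s, hs, t, ht, hst, rfl⟩
      have hpos : (0 : ℝ) < |t - s| ^ (2 * γ) :=
        Real.rpow_pos_of_pos (abs_pos.2 (sub_ne_zero.2 (fun h => hst h.symm))) _
      rw [div_le_iff₀ hpos]
      have h1 := hr s t
      have h2 := hK s hs t ht
      have hpow : |t - s| ^ (2 * γ) = (|t - s| ^ γ) * (|t - s| ^ γ) := by
        rw [← Real.rpow_add' (abs_nonneg _)]
        · ring_nf
        · positivity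
      calc |r s t| ≤ M * ‖x t - x s‖ * ‖x t - x s‖ := h1
        _ ≤ M * (K * |t - s| ^ γ) * (K * |t - s| ^ γ) := by
            have hnn := norm_nonneg (x t - x s)
            have hKp : 0 ≤ K * |t - s| ^ γ := le_trans hnn h2
            have h4 : ‖x t - x s‖ * ‖x t - x s‖ ≤ (K * |t - s| ^ γ) * (K * |t - s| ^ γ) :=
              mul_le_mul h2 h2 hnn hKp
            calc M * ‖x t - x s‖ * ‖x t - x s‖ = M * (‖x t - x s‖ * ‖x t - x s‖) := by ring
              _ ≤ M * ((K * |t - s| ^ γ) * (K * |t - s| ^ γ)) :=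
                  mul_le_mul_of_nonneg_left h4 hM0
              _ = M * (K * |t - s| ^ γ) * (K * |t - s| ^ γ) := by ring
        _ = M * K ^ 2 * |t - s| ^ (2 * γ) := by rw [hpow]; ring
    nlinarith [mul_nonneg hM0 (sq_nonneg (K - 1))]
end
end

section
/- Let x satisfy the order-2 rough path hypotheses (γ-Hölder with γ > 1/3, Lévy area x² with δx² = x¹ ⊗ x¹ and the geometric relation x¹_{st}(i)x¹_{st}(j) = x²_{st}(i,j) + x²_{st}(j,i)), and let f ∈ C³(ℝ^d; ℝ). Then f(x_t) − f(x_s) equals the limit, over partitions of [s,t] with mesh tending to zero, of Σ_{q=0}^{n−1} [ Σᵢ ∂ᵢf(x_{t_q}) x¹_{t_q t_{q+1}}(i) + Σ_{i₁,i₂} ∂²_{i₁i₂}f(x_{t_q}) x²_{t_q t_{q+1}}(i₁,i₂) ]. -/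
open Set Metric



set_option synthInstance.maxHeartbeats 400000 in
lemma taylor2_aux {E : Type*} [NormedAddCommGroup E] [NormedSpace ℝ E] [ProperSpace E]
    (f : E → ℝ) (hf : ContDiff ℝ 3 f) (R : ℝ) :
    ∃ M : ℝ, 0 ≤ M ∧ ∀ a ∈ closedBall (0:E) R, ∀ b ∈ closedBall (0:E) R,
      |f b - f a - fderiv ℝ f a (b - a) - fderiv ℝ (fderiv ℝ f) a (b - a) (b - a) / 2|
        ≤ M * ‖b - a‖ ^ 3 := by
  set f' := fderiv ℝ f with hf'def
  set f'' := fderiv ℝ f' with hf''def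
  have hf1 : ContDiff ℝ 2 f' := hf.fderiv_right (by norm_num)
  have hf2 : ContDiff ℝ 1 f'' := hf1.fderiv_right (by norm_num)
  have hdf : Differentiable ℝ f := hf.differentiable (by norm_num)
  have hdf' : Differentiable ℝ f' := hf1.differentiable (by norm_num)
  have hdf'' : Differentiable ℝ f'' := hf2.differentiable (by norm_num)
  letI : NormedAddCommGroup (E →L[ℝ] E →L[ℝ] ℝ) := inferInstance
  letI : NormedSpace ℝ (E →L[ℝ] E →L[ℝ] ℝ) := inferInstance
  have hc3 : Continuous (fderiv ℝ f'') := hf2.continuous_fderiv (by norm_num)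
  obtain ⟨L, hL⟩ := (isCompact_closedBall (0:E) R).exists_bound_of_continuousOn
    hc3.continuousOn
  refine ⟨max L 0, le_max_right _ _, ?_⟩
  intro a ha b hb
  set M := max L 0 with hMdef
  have hM0 : (0:ℝ) ≤ M := le_max_right _ _
  have hLM : ∀ z ∈ closedBall (0:E) R, ‖fderiv ℝ f'' z‖ ≤ M :=
    fun z hz => (hL z hz).trans (le_max_left _ _)
  -- Lipschitz bound on f'' over the ball
  have step1 : ∀ z ∈ closedBall (0:E) R, ‖f'' z - f'' a‖ ≤ M * ‖z - a‖ := by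
    intro z hz
    exact Convex.norm_image_sub_le_of_norm_fderiv_le (fun w _ => (hdf'' w)) hLM
      (convex_closedBall _ _) ha hz
  have hseg : segment ℝ a b ⊆ closedBall (0:E) R :=
    (convex_closedBall _ _).segment_subset ha hb
  have hzn : ∀ z ∈ segment ℝ a b, ‖z - a‖ ≤ ‖b - a‖ := by
    rintro z ⟨u, v, hu, hv, huv, rfl⟩
    have h1 : u • a + v • b - a = v • (b - a) := by
      have hu' : u = 1 - v := by linarith
      subst hu'
      simp [sub_smul, smul_sub, one_smul]
      abel
    rw [h1, norm_smul, Real.norm_eq_abs, abs_of_nonneg hv]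
    nlinarith [norm_nonneg (b - a), hv]
  -- second-order bound on f'
  have step2 : ∀ z ∈ segment ℝ a b,
      ‖f' z - f' a - f'' a (z - a)‖ ≤ (M * ‖b - a‖) * ‖b - a‖ := by
    intro z hz
    have h := Convex.norm_image_sub_le_of_norm_hasFDerivWithin_le'
      (f := f') (f' := f'') (φ := f'' a) (C := M * ‖b - a‖) (s := segment ℝ a b)
      (fun w hw => (hdf' w).hasFDerivAt.hasFDerivWithinAt)
      (fun w hw => by
        calc ‖f'' w - f'' a‖ ≤ M * ‖w - a‖ := step1 w (hseg hw)
          _ ≤ M * ‖b - a‖ := by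
              exact mul_le_mul_of_nonneg_left (hzn w hw) hM0)
      (convex_segment a b) (left_mem_segment ℝ a b) hz
    calc ‖f' z - f' a - f'' a (z - a)‖ ≤ (M * ‖b - a‖) * ‖z - a‖ := h
      _ ≤ (M * ‖b - a‖) * ‖b - a‖ := by
          exact mul_le_mul_of_nonneg_left (hzn z hz) (by positivity)
  -- symmetry of the second derivative
  have hsym : ∀ v w, f'' a v w = f'' a w v :=
    second_derivative_symmetric (fun y => (hdf y).hasFDerivAt) (hdf' a).hasFDerivAt
  -- the compensated function and its derivative
  set g : E → ℝ := fun z => f z - f' a (z - a) - f'' a (z - a) (z - a) / 2 with hgdef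
  have hgderiv : ∀ z, HasFDerivAt g (f' z - f' a - f'' a (z - a)) z := by
    intro z
    have h1 : HasFDerivAt f (f' z) z := (hdf z).hasFDerivAt
    have h2 : HasFDerivAt (fun w => f' a (w - a)) (f' a) z := by
      have := ((f' a).hasFDerivAt (x := z)).sub_const (f' a a)
      convert this using 1
      · rfl
      · rfl
      funext w
      simp [map_sub]
    have hc : HasFDerivAt (fun w => f'' a (w - a)) (f'' a) z := by
      have := ((f'' a).hasFDerivAt (x := z)).sub_const (f'' a a)
      convert this using 1
      · rfl
      · rfl
      · rfl
      funext w
      simp [map_sub]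
    have hu : HasFDerivAt (fun w : E => w - a) (ContinuousLinearMap.id ℝ E) z :=
      (hasFDerivAt_id z).sub_const a
    have h3 : HasFDerivAt (fun w => f'' a (w - a) (w - a) / 2)
        ((2:ℝ)⁻¹ • (((f'' a) (z - a)).comp (ContinuousLinearMap.id ℝ E)
          + (f'' a).flip (z - a))) z := by
      have h30 := (hc.clm_apply hu).const_smul ((2:ℝ)⁻¹)
      convert h30 using 1
      · rfl
      · rfl
      funext w
      simp only [Pi.smul_apply, smul_eq_mul]
      ring
    have h4 := (h1.sub h2).sub h3
    convert h4 using 1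
    · rfl
    · rfl
    · rfl
    ext w
    have := hsym w (z - a)
    simp only [ContinuousLinearMap.coe_sub', Pi.sub_apply, ContinuousLinearMap.add_apply,
      ContinuousLinearMap.coe_comp', Function.comp_apply, ContinuousLinearMap.coe_id', id_eq,
      ContinuousLinearMap.flip_apply, ContinuousLinearMap.coe_smul', Pi.smul_apply,
      smul_eq_mul]
    linarith
  have step4 : ‖g b - g a‖ ≤ (M * ‖b - a‖ * ‖b - a‖) * ‖b - a‖ := by
    exact Convex.norm_image_sub_le_of_norm_hasFDerivWithin_le
      (f := g) (f' := fun z => f' z - f' a - f'' a (z - a))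
      (fun z hz => (hgderiv z).hasFDerivWithinAt)
      (fun z hz => by
        have := step2 z hz
        calc ‖f' z - f' a - f'' a (z - a)‖ ≤ (M * ‖b - a‖) * ‖b - a‖ := this
          _ = M * ‖b - a‖ * ‖b - a‖ := rfl)
      (convex_segment a b) (left_mem_segment ℝ a b) (right_mem_segment ℝ a b)
  have hga : g a = f a := by simp [hgdef]
  have hgb : g b = f b - f' a (b - a) - f'' a (b - a) (b - a) / 2 := rfl
  rw [hga, hgb] at step4
  rw [Real.norm_eq_abs] at step4
  calc |f b - f a - f' a (b - a) - f'' a (b - a) (b - a) / 2|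
      = |f b - f' a (b - a) - f'' a (b - a) (b - a) / 2 - f a| := by ring_nf
    _ ≤ M * ‖b - a‖ * ‖b - a‖ * ‖b - a‖ := step4
    _ = M * ‖b - a‖ ^ 3 := by ring


lemma fin_telescope {M : Type*} [AddCommGroup M] (n : ℕ) (g : Fin (n + 1) → M) :
    ∑ q : Fin n, (g q.succ - g q.castSucc) = g (Fin.last n) - g 0 := by
  induction n with
  | zero => simp
  | succ n ih =>
    rw [Fin.sum_univ_castSucc]
    have h := ih (g ∘ Fin.castSucc)
    simp only [Function.comp_apply, Fin.succ_castSucc] at h ⊢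
    rw [h]
    simp [Fin.succ_last]

lemma clm_coord {d : ℕ} (L : EuclideanSpace ℝ (Fin d) →L[ℝ] ℝ)
    (v : EuclideanSpace ℝ (Fin d)) :
    L v = ∑ i, L (EuclideanSpace.single i 1) * v i := by
  have hv := (EuclideanSpace.basisFun (Fin d) ℝ).sum_repr v
  simp only [EuclideanSpace.basisFun_apply, EuclideanSpace.basisFun_repr] at hv
  conv_lhs => rw [← hv]
  rw [map_sum]
  simp [mul_comm]

/-- Itô–Stratonovich change of variables at order 2: under the order-2 rough path
hypotheses on `x`, for `f ∈ C³(ℝ^d; ℝ)`, `f(x_t) − f(x_s)` is the limit of the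
compensated Riemann sums
`∑_q [ ∑ᵢ ∂ᵢf(x_{t_q}) x¹_{t_q t_{q+1}}(i) + ∑_{i₁ i₂} ∂²_{i₁i₂} f(x_{t_q}) x²_{t_q t_{q+1}}(i₁,i₂) ]`
over partitions of `[s,t]` whose mesh tends to `0`. -/
theorem stmt8 (d : ℕ) (T γ : ℝ) (hT : 0 < T) (hγ1 : 1 / 3 < γ) (hγ2 : γ ≤ 1 / 2)
    (x : ℝ → EuclideanSpace ℝ (Fin d)) (x2 : ℝ → ℝ → Fin d → Fin d → ℝ)
    (hx : ∃ Cx : ℝ, ∀ s ∈ Icc (0 : ℝ) T, ∀ t ∈ Icc (0 : ℝ) T,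
      ‖x t - x s‖ ≤ Cx * |t - s| ^ γ)
    (hx2 : ∃ C2 : ℝ, ∀ s ∈ Icc (0 : ℝ) T, ∀ t ∈ Icc (0 : ℝ) T, ∀ i j,
      |x2 s t i j| ≤ C2 * |t - s| ^ (2 * γ))
    (hmult : ∀ s ∈ Icc (0 : ℝ) T, ∀ u ∈ Icc (0 : ℝ) T, ∀ t ∈ Icc (0 : ℝ) T, ∀ i j,
      x2 s t i j - x2 s u i j - x2 u t i j = (x u i - x s i) * (x t j - x u j))
    (hgeo : ∀ s ∈ Icc (0 : ℝ) T, ∀ t ∈ Icc (0 : ℝ) T, ∀ i j,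
      (x t i - x s i) * (x t j - x s j) = x2 s t i j + x2 s t j i)
    (f : EuclideanSpace ℝ (Fin d) → ℝ) (hf : ContDiff ℝ 3 f)
    (s t : ℝ) (hs : s ∈ Icc (0 : ℝ) T) (ht : t ∈ Icc (0 : ℝ) T) (hst : s ≤ t) :
    ∀ ε > (0 : ℝ), ∃ η > (0 : ℝ), ∀ (n : ℕ) (π : Fin (n + 1) → ℝ),
      Monotone π → π 0 = s → π (Fin.last n) = t →
      (∀ q : Fin n, π q.succ - π q.castSucc < η) →
      |(∑ q : Fin n,
          ((∑ i, fderiv ℝ f (x (π q.castSucc)) (EuclideanSpace.single i 1) *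
              (x (π q.succ) i - x (π q.castSucc) i)) +
           ∑ i, ∑ j,
            fderiv ℝ (fun z => fderiv ℝ f z (EuclideanSpace.single i 1))
                (x (π q.castSucc)) (EuclideanSpace.single j 1) *
              x2 (π q.castSucc) (π q.succ) i j))
        - (f (x t) - f (x s))| < ε := by
  intro ε hε
  classical
  obtain ⟨Cx0, hCx0⟩ := hx
  set Cx := max Cx0 0 with hCxdef
  have hCxpos : (0:ℝ) ≤ Cx := le_max_right _ _
  have hγ0 : 0 < γ := by linarith
  have hCxb : ∀ u ∈ Icc (0:ℝ) T, ∀ v ∈ Icc (0:ℝ) T,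
      ‖x v - x u‖ ≤ Cx * |v - u| ^ γ := by
    intro u hu v hv
    exact (hCx0 u hu v hv).trans
      (mul_le_mul_of_nonneg_right (le_max_left _ _) (Real.rpow_nonneg (abs_nonneg _) _))
  set R := ‖x 0‖ + Cx * T ^ γ with hRdef
  have hxR : ∀ u ∈ Icc (0:ℝ) T, x u ∈ Metric.closedBall (0 : EuclideanSpace ℝ (Fin d)) R := by
    intro u hu
    rw [Metric.mem_closedBall, dist_zero_right]
    have h1 : ‖x u‖ ≤ ‖x 0‖ + ‖x u - x 0‖ := by
      calc ‖x u‖ = ‖x 0 + (x u - x 0)‖ := by rw [add_sub_cancel]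
        _ ≤ ‖x 0‖ + ‖x u - x 0‖ := norm_add_le _ _
    have h2 : ‖x u - x 0‖ ≤ Cx * |u - 0| ^ γ := hCxb 0 ⟨le_rfl, hT.le⟩ u hu
    have h3 : |u - 0| ^ γ ≤ T ^ γ := by
      rw [sub_zero, abs_of_nonneg hu.1]
      exact Real.rpow_le_rpow hu.1 hu.2 hγ0.le
    have h4 : Cx * |u - 0| ^ γ ≤ Cx * T ^ γ := mul_le_mul_of_nonneg_left h3 hCxpos
    rw [hRdef]; linarith
  obtain ⟨M, hM0, hTay⟩ := taylor2_aux f hf R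
  have hdf : Differentiable ℝ f := hf.differentiable (by norm_num)
  have hdf' : Differentiable ℝ (fderiv ℝ f) :=
    (hf.fderiv_right (m := 2) (by norm_num)).differentiable (by norm_num)
  have hsym : ∀ p v w, fderiv ℝ (fderiv ℝ f) p v w = fderiv ℝ (fderiv ℝ f) p w v :=
    fun p => second_derivative_symmetric (fun y => (hdf y).hasFDerivAt) (hdf' p).hasFDerivAt
  set β := 3 * γ - 1 with hβdef
  have hβ0 : 0 < β := by rw [hβdef]; linarith
  set K := M * Cx ^ 3 with hKdef
  have hK0 : (0:ℝ) ≤ K := by positivity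
  have hts : (0:ℝ) ≤ t - s := sub_nonneg.mpr hst
  set c := ε / (K * (t - s) + 1) with hcdef
  have hden : (0:ℝ) < K * (t - s) + 1 := by positivity
  have hcpos : 0 < c := div_pos hε hden
  refine ⟨c ^ β⁻¹, Real.rpow_pos_of_pos hcpos _, ?_⟩
  intro n π hmono hπ0 hπl hmesh
  have hmemst : ∀ q : Fin (n+1), π q ∈ Icc s t := fun q =>
    ⟨hπ0 ▸ hmono (Fin.zero_le q), hπl ▸ hmono (Fin.le_last q)⟩
  have hmemT : ∀ q : Fin (n+1), π q ∈ Icc (0:ℝ) T := fun q =>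
    ⟨le_trans hs.1 (hmemst q).1, le_trans (hmemst q).2 ht.2⟩
  -- abbreviation for each summand
  set term : Fin n → ℝ := fun q =>
    ((∑ i, fderiv ℝ f (x (π q.castSucc)) (EuclideanSpace.single i 1) *
        (x (π q.succ) i - x (π q.castSucc) i)) +
     ∑ i, ∑ j,
      fderiv ℝ (fun z => fderiv ℝ f z (EuclideanSpace.single i 1))
          (x (π q.castSucc)) (EuclideanSpace.single j 1) *
        x2 (π q.castSucc) (π q.succ) i j) with htermdef
  have key : ∀ q : Fin n,
      |term q - (f (x (π q.succ)) - f (x (π q.castSucc)))|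
        ≤ K * c * (π q.succ - π q.castSucc) := by
    intro q
    set a := π q.castSucc with hadef
    set b := π q.succ with hbdef
    have haT : a ∈ Icc (0:ℝ) T := hmemT _
    have hbT : b ∈ Icc (0:ℝ) T := hmemT _
    have hab : a ≤ b := hmono (Fin.castSucc_lt_succ : q.castSucc < q.succ).le
    have hΔ0 : (0:ℝ) ≤ b - a := sub_nonneg.mpr hab
    have hΔη : b - a < c ^ β⁻¹ := hmesh q
    set v : EuclideanSpace ℝ (Fin d) := x b - x a with hvdef
    have hvi : ∀ i, v i = x b i - x a i := fun i => rfl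
    -- first-order term
    have hA1 : (∑ i, fderiv ℝ f (x a) (EuclideanSpace.single i 1) * (x b i - x a i))
        = fderiv ℝ f (x a) v := by
      rw [clm_coord (fderiv ℝ f (x a)) v]
      rfl
    -- second derivative identification
    have hD2 : ∀ i j, fderiv ℝ (fun z => fderiv ℝ f z (EuclideanSpace.single i 1))
          (x a) (EuclideanSpace.single j 1)
        = fderiv ℝ (fderiv ℝ f) (x a) (EuclideanSpace.single j 1) (EuclideanSpace.single i 1) := by
      intro i j
      have h := fderiv_clm_apply (c := fderiv ℝ f)
        (u := fun _ : EuclideanSpace ℝ (Fin d) => EuclideanSpace.single i (1:ℝ))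
        (x := x a) (hdf' _) (differentiableAt_const _)
      rw [h]
      simp
    -- second-order term
    have hA2 : (∑ i, ∑ j,
          fderiv ℝ (fun z => fderiv ℝ f z (EuclideanSpace.single i 1))
            (x a) (EuclideanSpace.single j 1) * x2 a b i j)
        = fderiv ℝ (fderiv ℝ f) (x a) v v / 2 := by
      have hexp : fderiv ℝ (fderiv ℝ f) (x a) v v
          = ∑ i, ∑ j, fderiv ℝ (fderiv ℝ f) (x a) (EuclideanSpace.single j 1)
              (EuclideanSpace.single i 1) * v j * v i := by
        rw [clm_coord (fderiv ℝ (fderiv ℝ f) (x a) v) v]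
        congr 1
        funext i
        have hflip : ∀ w : EuclideanSpace ℝ (Fin d),
            fderiv ℝ (fderiv ℝ f) (x a) w (EuclideanSpace.single i 1)
            = ((fderiv ℝ (fderiv ℝ f) (x a)).flip (EuclideanSpace.single i 1)) w :=
          fun w => rfl
        rw [hflip, clm_coord, Finset.sum_mul]
        simp only [ContinuousLinearMap.flip_apply]
      have hgeo' : ∀ i j : Fin d, v j * v i = x2 a b j i + x2 a b i j := by
        intro i j
        rw [hvi, hvi]
        exact hgeo a haT b hbT j i
      rw [hexp]
      have : ∀ i j : Fin d,
          fderiv ℝ (fderiv ℝ f) (x a) (EuclideanSpace.single j 1)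
              (EuclideanSpace.single i 1) * v j * v i
          = fderiv ℝ (fderiv ℝ f) (x a) (EuclideanSpace.single j 1)
              (EuclideanSpace.single i 1) * x2 a b j i
          + fderiv ℝ (fderiv ℝ f) (x a) (EuclideanSpace.single j 1)
              (EuclideanSpace.single i 1) * x2 a b i j := by
        intro i j
        rw [mul_assoc, hgeo' i j, mul_add]
      simp only [this, Finset.sum_add_distrib]
      have hswap : (∑ i, ∑ j, fderiv ℝ (fderiv ℝ f) (x a) (EuclideanSpace.single j 1)
            (EuclideanSpace.single i 1) * x2 a b j i)
          = ∑ i, ∑ j, fderiv ℝ (fderiv ℝ f) (x a) (EuclideanSpace.single j 1)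
            (EuclideanSpace.single i 1) * x2 a b i j := by
        rw [Finset.sum_comm]
        congr 1
        funext i
        congr 1
        funext j
        rw [hsym]
      rw [hswap]
      have hD2' : (∑ i, ∑ j, fderiv ℝ (fun z => fderiv ℝ f z (EuclideanSpace.single i 1))
            (x a) (EuclideanSpace.single j 1) * x2 a b i j)
          = ∑ i, ∑ j, fderiv ℝ (fderiv ℝ f) (x a) (EuclideanSpace.single j 1)
            (EuclideanSpace.single i 1) * x2 a b i j := by
        congr 1
        funext i
        congr 1
        funext j
        rw [hD2]
      rw [hD2']
      ring
    -- Taylor estimate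
    have hTayq := hTay (x a) (hxR a haT) (x b) (hxR b hbT)
    have hterm : term q = fderiv ℝ f (x a) v + fderiv ℝ (fderiv ℝ f) (x a) v v / 2 := by
      rw [htermdef]
      simp only []
      rw [hA1, hA2]
    have hest : |term q - (f (x b) - f (x a))| ≤ M * ‖v‖ ^ 3 := by
      rw [hterm]
      have : fderiv ℝ f (x a) v + fderiv ℝ (fderiv ℝ f) (x a) v v / 2 - (f (x b) - f (x a))
          = -(f (x b) - f (x a) - fderiv ℝ f (x a) (x b - x a)
              - fderiv ℝ (fderiv ℝ f) (x a) (x b - x a) (x b - x a) / 2) := by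
        rw [← hvdef]; ring
      rw [this, abs_neg]
      exact hTayq
    -- norm bound
    have hnv : ‖v‖ ≤ Cx * |b - a| ^ γ := hCxb a haT b hbT
    have habs : |b - a| = b - a := abs_of_nonneg hΔ0
    have hv3 : ‖v‖ ^ 3 ≤ Cx ^ 3 * ((b - a) ^ γ) ^ (3:ℕ) := by
      calc ‖v‖ ^ 3 ≤ (Cx * (b - a) ^ γ) ^ 3 := by
            apply pow_le_pow_left₀ (norm_nonneg v)
            rw [← habs]; exact hnv
        _ = Cx ^ 3 * ((b - a) ^ γ) ^ (3:ℕ) := by ring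
    have hpow : ((b - a) ^ γ) ^ (3:ℕ) = (b - a) ^ β * (b - a) := by
      rw [← Real.rpow_natCast ((b - a) ^ γ) 3, ← Real.rpow_mul hΔ0]
      have h31 : γ * (3:ℕ) = β + 1 := by rw [hβdef]; push_cast; ring
      rw [h31, Real.rpow_add' hΔ0 (by linarith), Real.rpow_one]
    have hβb : (b - a) ^ β ≤ c := by
      calc (b - a) ^ β ≤ (c ^ β⁻¹) ^ β :=
            Real.rpow_le_rpow hΔ0 hΔη.le hβ0.le
        _ = c := Real.rpow_inv_rpow hcpos.le hβ0.ne'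
    calc |term q - (f (x b) - f (x a))| ≤ M * ‖v‖ ^ 3 := hest
      _ ≤ M * (Cx ^ 3 * ((b - a) ^ β * (b - a))) := by
          rw [← hpow]
          exact mul_le_mul_of_nonneg_left hv3 hM0
      _ ≤ M * (Cx ^ 3 * (c * (b - a))) := by
          apply mul_le_mul_of_nonneg_left _ hM0
          apply mul_le_mul_of_nonneg_left _ (by positivity)
          exact mul_le_mul_of_nonneg_right hβb hΔ0
      _ = K * c * (b - a) := by rw [hKdef]; ring
  -- telescoping identities
  have hTel : ∑ q : Fin n, (f (x (π q.succ)) - f (x (π q.castSucc))) = f (x t) - f (x s) := by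
    have h := fin_telescope n (fun q => f (x (π q)))
    rw [hπl, hπ0] at h
    exact h
  have hTel2 : ∑ q : Fin n, (π q.succ - π q.castSucc) = t - s := by
    have h := fin_telescope n π
    rw [hπl, hπ0] at h
    exact h
  have hmain : |(∑ q : Fin n, term q) - (f (x t) - f (x s))| ≤ K * c * (t - s) := by
    calc |(∑ q : Fin n, term q) - (f (x t) - f (x s))|
        = |∑ q : Fin n, (term q - (f (x (π q.succ)) - f (x (π q.castSucc))))| := by
          rw [Finset.sum_sub_distrib, hTel]
      _ ≤ ∑ q : Fin n, |term q - (f (x (π q.succ)) - f (x (π q.castSucc)))| :=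
          Finset.abs_sum_le_sum_abs _ _
      _ ≤ ∑ q : Fin n, K * c * (π q.succ - π q.castSucc) := Finset.sum_le_sum (fun q _ => key q)
      _ = K * c * (t - s) := by rw [← Finset.mul_sum, hTel2]
  have hfinal : K * c * (t - s) < ε := by
    have h1 : K * (t - s) / (K * (t - s) + 1) < 1 := (div_lt_one hden).mpr (lt_add_one _)
    have h2 : K * c * (t - s) = ε * (K * (t - s) / (K * (t - s) + 1)) := by
      rw [hcdef]; field_simp
    rw [h2]
    calc ε * (K * (t - s) / (K * (t - s) + 1)) < ε * 1 := by
          apply mul_lt_mul_of_pos_left h1 hε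
      _ = ε := mul_one ε
  exact lt_of_le_of_lt hmain hfinal
end

section
/- Let x be a weakly geometric rough path of roughness γ with N = ⌊1/γ⌋ and let f ∈ C_b^N(ℝ^d). Then for all (s,t), the Taylor-shuffle identity holds: Σ_{k=1}^{N−1} (1/k!) Σ_{i₁,…,i_k} ∂^k_{i₁⋯i_k} f(x_s) Π_{j=1}^k x¹_{st}(i_j) = Σ_{k=1}^{N−1} Σ_{i₁,…,i_k} ∂^k_{i_k⋯i₁} f(x_s) x^k_{st}(i₁,…,i_k); consequently δ(f(x))_{st} = Σ_{k=1}^{N−1} ∂^k_{i_k⋯i₁}f(x_s) x^k_{st}(i₁,…,i_k) + r⁰_{st} with r⁰ ∈ C₂^{Nγ}. -/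
open Set Function

section Aux

variable {E F : Type*} [NormedAddCommGroup E] [NormedSpace ℝ E]
  [NormedAddCommGroup F] [NormedSpace ℝ F]

private theorem iFD_two_formula (n : ℕ) (f : E → F) (x : E) (m : Fin (n+2) → E) :
    iteratedFDeriv ℝ (n+2) f x m
      = fderiv ℝ (fderiv ℝ (iteratedFDeriv ℝ n f)) x (m 0) (m 1) (fun j => m j.succ.succ) := by
  have h : fderiv ℝ (iteratedFDeriv ℝ (n+1) f) x
      = ((continuousMultilinearCurryLeftEquiv ℝ (fun _ : Fin (n+1) => E) F).symm.toContinuousLinearEquiv :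
          _ →L[ℝ] _).comp (fderiv ℝ (fderiv ℝ (iteratedFDeriv ℝ n f)) x) := by
    conv_lhs => rw [iteratedFDeriv_succ_eq_comp_left]
    exact ContinuousLinearEquiv.comp_fderiv (𝕜 := ℝ) (F := ContinuousMultilinearMap ℝ (fun _ : Fin (n+1) => E) F)
      ((continuousMultilinearCurryLeftEquiv ℝ (fun _ : Fin (n+1) => E) F).symm.toContinuousLinearEquiv)
      (f := fderiv ℝ (iteratedFDeriv ℝ n f)) (x := x)
  rw [iteratedFDeriv_succ_apply_left, h]
  rfl

private theorem iFD_swap01 (n : ℕ) (f : E → F) (hf : ContDiff ℝ (n+2 : ℕ) f) (x : E)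
    (m : Fin (n+2) → E) :
    iteratedFDeriv ℝ (n+2) f x (m ∘ Equiv.swap 0 1) = iteratedFDeriv ℝ (n+2) f x m := by
  have hsymm : IsSymmSndFDerivAt ℝ (iteratedFDeriv ℝ n f) x :=
    (hf.iteratedFDeriv_right (m := 2) (n := (n+2:ℕ)) (by norm_cast; omega)).contDiffAt.isSymmSndFDerivAt (by simp [minSmoothness_of_isRCLikeNormedField])
  rw [iFD_two_formula, iFD_two_formula]
  have h0 : (m ∘ Equiv.swap 0 1) 0 = m 1 := by simp
  have h1 : (m ∘ Equiv.swap 0 1) 1 = m 0 := by simp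
  have h2 : (fun j : Fin n => (m ∘ Equiv.swap 0 1) j.succ.succ) = fun j => m j.succ.succ := by
    funext j
    have hj0 : (j.succ.succ : Fin (n+2)) ≠ 0 := Fin.succ_ne_zero _
    have hj1 : (j.succ.succ : Fin (n+2)) ≠ 1 := by
      simp [Fin.ext_iff, Fin.val_succ]
    simp [Equiv.swap_apply_of_ne_of_ne hj0 hj1]
  rw [h0, h1, h2, hsymm.eq (m 1) (m 0)]

private theorem swap_succ {n : ℕ} (a b j : Fin n) :
    Equiv.swap a.succ b.succ j.succ = (Equiv.swap a b j).succ := by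
  rcases eq_or_ne j a with rfl | ha
  · simp
  rcases eq_or_ne j b with rfl | hb
  · simp
  · rw [Equiv.swap_apply_of_ne_of_ne ha hb,
      Equiv.swap_apply_of_ne_of_ne (by simpa [Fin.succ_inj] using ha)
        (by simpa [Fin.succ_inj] using hb)]

private theorem comp_swap_decomp {α β : Type*} [DecidableEq α] (m : α → β) (z o c : α)
    (hzo : z ≠ o) (hzc : z ≠ c) (hoc : o ≠ c) :
    m ∘ Equiv.swap z c = ((m ∘ Equiv.swap o c) ∘ Equiv.swap z o) ∘ Equiv.swap o c := by
  funext i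
  simp only [comp_apply]
  rcases eq_or_ne i z with rfl | hiz
  · simp only [Equiv.swap_apply_of_ne_of_ne hzo hzc, Equiv.swap_apply_left]
  rcases eq_or_ne i o with rfl | hio
  · simp only [Equiv.swap_apply_left, Equiv.swap_apply_right,
      Equiv.swap_apply_of_ne_of_ne (Ne.symm hzc) (Ne.symm hoc),
      Equiv.swap_apply_of_ne_of_ne (Ne.symm hzo) hoc]
  rcases eq_or_ne i c with rfl | hic
  · simp only [Equiv.swap_apply_right, Equiv.swap_apply_of_ne_of_ne hzo hzc,
      Equiv.swap_apply_left]
  · simp only [Equiv.swap_apply_of_ne_of_ne hiz hic,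
      Equiv.swap_apply_of_ne_of_ne hio hic,
      Equiv.swap_apply_of_ne_of_ne hiz hio]

private theorem fderiv_iFD_symm (n : ℕ) (f : E → F) (hf : ContDiff ℝ ((n+1 : ℕ)) f)
    (τ : Equiv.Perm (Fin n))
    (hsymm : ∀ (y : E) (w : Fin n → E),
      iteratedFDeriv ℝ n f y (w ∘ τ) = iteratedFDeriv ℝ n f y w)
    (x : E) (u : E) (w : Fin n → E) :
    fderiv ℝ (iteratedFDeriv ℝ n f) x u (w ∘ τ) = fderiv ℝ (iteratedFDeriv ℝ n f) x u w := by
  set L := (ContinuousMultilinearMap.domDomCongrₗᵢ ℝ E F τ).toContinuousLinearEquiv with hL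
  have hg : ContDiff ℝ 1 (iteratedFDeriv ℝ n f) :=
    hf.iteratedFDeriv_right (n := (n+1 : ℕ)) (by norm_cast; omega)
  have hA : HasFDerivAt (iteratedFDeriv ℝ n f) (fderiv ℝ (iteratedFDeriv ℝ n f) x) x :=
    ((hg.differentiable one_ne_zero) x).hasFDerivAt
  have hLg : ⇑L ∘ (iteratedFDeriv ℝ n f) = iteratedFDeriv ℝ n f := by
    funext y
    ext w'
    exact hsymm y w'
  have h2 : HasFDerivAt (iteratedFDeriv ℝ n f)
      ((L : _ →L[ℝ] _).comp (fderiv ℝ (iteratedFDeriv ℝ n f) x)) x := by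
    have := (L.toContinuousLinearMap.hasFDerivAt (x := iteratedFDeriv ℝ n f x)).comp x hA
    rwa [show ⇑L.toContinuousLinearMap ∘ iteratedFDeriv ℝ n f = iteratedFDeriv ℝ n f from hLg]
      at this
  have heq := hA.unique h2
  have happ : fderiv ℝ (iteratedFDeriv ℝ n f) x u w
      = fderiv ℝ (iteratedFDeriv ℝ n f) x u (w ∘ τ) := by
    conv_lhs => rw [heq]
    rfl
  exact happ.symm

private theorem iFD_swap : ∀ (n : ℕ) (f : E → F), ContDiff ℝ (n : ℕ) f → ∀ (x : E)
    (m : Fin n → E) (a b : Fin n),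
    iteratedFDeriv ℝ n f x (m ∘ Equiv.swap a b) = iteratedFDeriv ℝ n f x m := by
  intro n
  induction n with
  | zero => intro f hf x m a b; exact a.elim0
  | succ n IH =>
    rcases n with _ | n
    · intro f hf x m a b
      have : a = b := by omega
      subst this
      simp [Equiv.swap_self]
    intro f hf x m a b
    have hB : ∀ (m : Fin (n+2) → E) (a' b' : Fin (n+1)),
        iteratedFDeriv ℝ (n+2) f x (m ∘ Equiv.swap a'.succ b'.succ)
          = iteratedFDeriv ℝ (n+2) f x m := by
      intro m a' b'
      rcases eq_or_ne a' b' with rfl | h'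
      · simp [Equiv.swap_self]
      have hfn : ContDiff ℝ ((n+1 : ℕ)) f := hf.of_le (by exact_mod_cast Nat.le_succ (n+1))
      have hsymm : ∀ (y : E) (w : Fin (n+1) → E),
          iteratedFDeriv ℝ (n+1) f y (w ∘ Equiv.swap a' b') = iteratedFDeriv ℝ (n+1) f y w :=
        fun y w => IH f hfn y w a' b'
      rw [iteratedFDeriv_succ_apply_left, iteratedFDeriv_succ_apply_left]
      have h0 : (m ∘ Equiv.swap a'.succ b'.succ) 0 = m 0 := by
        rw [comp_apply, Equiv.swap_apply_of_ne_of_ne (Fin.succ_ne_zero a').symm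
          (Fin.succ_ne_zero b').symm]
      have htail : Fin.tail (m ∘ Equiv.swap a'.succ b'.succ)
          = (Fin.tail m) ∘ (Equiv.swap a' b') := by
        funext j
        simp only [Fin.tail, comp_apply, swap_succ]
      rw [h0, htail]
      exact fderiv_iFD_symm (n+1) f hf (Equiv.swap a' b') hsymm x (m 0) (Fin.tail m)
    have hz : ∀ (m : Fin (n+2) → E) (c : Fin (n+2)), c ≠ 0 →
        iteratedFDeriv ℝ (n+2) f x (m ∘ Equiv.swap 0 c)
          = iteratedFDeriv ℝ (n+2) f x m := by
      intro m c hc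
      obtain ⟨c', rfl⟩ : ∃ c', Fin.succ c' = c := by rwa [Fin.exists_succ_eq]
      induction c' using Fin.cases with
      | zero =>
        rw [show Fin.succ (0 : Fin (n+1)) = 1 from rfl]
        exact iFD_swap01 n f hf x m
      | succ c'' =>
        have h01 : (0 : Fin (n+2)) ≠ 1 := by simp [Fin.ext_iff]
        have h0c : (0 : Fin (n+2)) ≠ c''.succ.succ := (Fin.succ_ne_zero _).symm
        have h1c : (1 : Fin (n+2)) ≠ c''.succ.succ := by
          simp [Fin.ext_iff, Fin.val_succ]
        rw [comp_swap_decomp m 0 1 c''.succ.succ h01 h0c h1c]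
        rw [show (1 : Fin (n+2)) = Fin.succ (0 : Fin (n+1)) from rfl]
        rw [hB ((m ∘ Equiv.swap (Fin.succ 0) c''.succ.succ) ∘ Equiv.swap 0 (Fin.succ 0))
          0 c''.succ]
        rw [show Fin.succ (0 : Fin (n+1)) = 1 from rfl]
        rw [iFD_swap01 n f hf x (m ∘ Equiv.swap 1 c''.succ.succ)]
        rw [show (1 : Fin (n+2)) = Fin.succ (0 : Fin (n+1)) from rfl]
        exact hB m 0 c''.succ
    rcases eq_or_ne a b with rfl | hab
    · simp [Equiv.swap_self]
    rcases eq_or_ne a 0 with rfl | ha0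
    · exact hz m b (Ne.symm hab)
    rcases eq_or_ne b 0 with rfl | hb0
    · rw [Equiv.swap_comm]; exact hz m a ha0
    obtain ⟨a', rfl⟩ : ∃ a', Fin.succ a' = a := by rwa [Fin.exists_succ_eq]
    obtain ⟨b', rfl⟩ : ∃ b', Fin.succ b' = b := by rwa [Fin.exists_succ_eq]
    exact hB m a' b'

private theorem iFD_perm (n : ℕ) (f : E → F) (hf : ContDiff ℝ (n : ℕ) f) (x : E)
    (σ : Equiv.Perm (Fin n)) (m : Fin n → E) :
    iteratedFDeriv ℝ n f x (m ∘ σ) = iteratedFDeriv ℝ n f x m := by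
  have key : ∀ σ : Equiv.Perm (Fin n), ∀ m : Fin n → E,
      iteratedFDeriv ℝ n f x (m ∘ σ) = iteratedFDeriv ℝ n f x m := fun σ =>
    Equiv.Perm.swap_induction_on (motive := fun σ => ∀ m : Fin n → E,
        iteratedFDeriv ℝ n f x (m ∘ σ) = iteratedFDeriv ℝ n f x m) σ
      (by intro m; simp)
      (by
        intro p a b hab IH m
        have : m ∘ ⇑(Equiv.swap a b * p) = (m ∘ Equiv.swap a b) ∘ p := by
          funext i; simp [Equiv.Perm.mul_apply]
        rw [this, IH (m ∘ Equiv.swap a b), iFD_swap n f hf x m a b])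
  exact key σ m

end Aux

section Taylor
variable {E : Type*} [NormedAddCommGroup E] [NormedSpace ℝ E]

theorem taylor_bound_aux : ∀ (n : ℕ) (f : E → ℝ) (M : ℝ), ContDiff ℝ (n : ℕ) f →
    (∀ k ≤ n, ∀ y : E, ‖iteratedFDeriv ℝ k f y‖ ≤ M) → ∀ (x v : E),
    |f (x + v) - ∑ k ∈ Finset.range n,
        ((Nat.factorial k : ℝ))⁻¹ * iteratedFDeriv ℝ k f x (fun _ => v)|
      ≤ M * ‖v‖ ^ n := by
  intro n
  induction n with
  | zero =>
    intro f M hf hb x v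
    have h := hb 0 le_rfl (x + v)
    rw [norm_iteratedFDeriv_zero] at h
    simp only [Finset.range_zero, Finset.sum_empty, sub_zero, pow_zero, mul_one]
    rw [← Real.norm_eq_abs]
    exact h
  | succ n IH =>
    intro f M hf hb x v
    have hM0 : 0 ≤ M := le_trans (norm_nonneg _) (hb 0 (Nat.zero_le _) x)
    -- the function g y = fderiv f y v
    set g : E → ℝ := fun y => fderiv ℝ f y v with hgdef
    have hfd : ContDiff ℝ (n : ℕ) (fderiv ℝ f) :=
      hf.fderiv_right (by exact_mod_cast le_rfl)
    have hg : ContDiff ℝ (n : ℕ) g := hfd.clm_apply contDiff_const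
    -- iterated derivatives of g
    have hgi : ∀ k ≤ n, ∀ (y : E) (w : Fin k → E),
        iteratedFDeriv ℝ k g y w = iteratedFDeriv ℝ k (fderiv ℝ f) y w v := by
      intro k hk y w
      have : g = (ContinuousLinearMap.apply ℝ ℝ v) ∘ (fderiv ℝ f) := rfl
      rw [this, ContinuousLinearMap.iteratedFDeriv_comp_left _ hfd.contDiffAt
        (by exact_mod_cast hk)]
      rfl
    have hgb : ∀ k ≤ n, ∀ y : E, ‖iteratedFDeriv ℝ k g y‖ ≤ M * ‖v‖ := by
      intro k hk y
      refine ContinuousMultilinearMap.opNorm_le_bound (by positivity) fun w => ?_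
      rw [hgi k hk y w]
      calc ‖iteratedFDeriv ℝ k (fderiv ℝ f) y w v‖
          ≤ ‖iteratedFDeriv ℝ k (fderiv ℝ f) y w‖ * ‖v‖ :=
            ContinuousLinearMap.le_opNorm _ v
        _ ≤ ‖iteratedFDeriv ℝ k (fderiv ℝ f) y‖ * (∏ i, ‖w i‖) * ‖v‖ := by
            gcongr; exact ContinuousMultilinearMap.le_opNorm _ w
        _ = ‖iteratedFDeriv ℝ (k+1) f y‖ * (∏ i, ‖w i‖) * ‖v‖ := by
            rw [norm_iteratedFDeriv_fderiv]
        _ ≤ M * (∏ i, ‖w i‖) * ‖v‖ := by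
            have hM1 := hb (k+1) (by omega) y
            gcongr
        _ = M * ‖v‖ * ∏ i, ‖w i‖ := by ring
    -- key identity for the Taylor coefficients of g
    have hgc : ∀ k ≤ n, ∀ u : ℝ, iteratedFDeriv ℝ k g x (fun _ => u • v)
        = u ^ k * iteratedFDeriv ℝ (k+1) f x (fun _ => v) := by
      intro k hk u
      have h1 : iteratedFDeriv ℝ k g x (fun _ => u • v)
          = (∏ _i : Fin k, u) • iteratedFDeriv ℝ k g x (fun _ => v) :=
        ContinuousMultilinearMap.map_smul_univ _ (fun _ => u) (fun _ => v)
      rw [h1, hgi k hk x (fun _ => v)]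
      have h2 : iteratedFDeriv ℝ (k+1) f x (fun _ => v)
          = iteratedFDeriv ℝ k (fderiv ℝ f) x (Fin.init (fun _ : Fin (k+1) => v))
              ((fun _ : Fin (k+1) => v) (Fin.last k)) := iteratedFDeriv_succ_apply_right _
      rw [show Fin.init (fun _ : Fin (k+1) => v) = fun _ : Fin k => v from rfl] at h2
      rw [h2]
      simp [smul_eq_mul, Finset.prod_const]
    -- the auxiliary one-variable function
    set c : ℕ → ℝ := fun k => iteratedFDeriv ℝ k f x (fun _ => v) with hc
    set F : ℝ → ℝ := fun u => f (x + u • v)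
      - ∑ k ∈ Finset.range (n+1), ((Nat.factorial k : ℝ))⁻¹ * u ^ k * c k with hF
    set F' : ℝ → ℝ := fun u => g (x + u • v)
      - ∑ k ∈ Finset.range n, ((Nat.factorial k : ℝ))⁻¹ * u ^ k * c (k+1) with hF'
    have hderiv : ∀ u : ℝ, HasDerivAt F (F' u) u := by
      intro u
      have hline : HasDerivAt (fun u : ℝ => x + u • v) v u := by
        simpa using ((hasDerivAt_id u).smul_const v).const_add x
      have h1 : HasDerivAt (fun u : ℝ => f (x + u • v)) (g (x + u • v)) u := by
        have hdf : HasFDerivAt f (fderiv ℝ f (x + u • v)) (x + u • v) :=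
          (hf.differentiable (by simp) _).hasFDerivAt
        exact hdf.comp_hasDerivAt u hline
      have h2 : HasDerivAt (fun u : ℝ => ∑ k ∈ Finset.range (n+1),
          ((Nat.factorial k : ℝ))⁻¹ * u ^ k * c k)
          (∑ k ∈ Finset.range n, ((Nat.factorial k : ℝ))⁻¹ * u ^ k * c (k+1)) u := by
        have h3 : HasDerivAt (fun u : ℝ => ∑ k ∈ Finset.range (n+1),
            ((Nat.factorial k : ℝ))⁻¹ * u ^ k * c k)
            (∑ k ∈ Finset.range (n+1),
              ((Nat.factorial k : ℝ))⁻¹ * ((k : ℝ) * u ^ (k-1)) * c k) u := by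
          apply HasDerivAt.fun_sum
          intro k hk
          simpa [mul_comm, mul_assoc, mul_left_comm] using
            (((hasDerivAt_pow k u).const_mul ((Nat.factorial k : ℝ))⁻¹).mul_const (c k))
        convert h3 using 1
        rw [Finset.sum_range_succ' (fun k => ((Nat.factorial k : ℝ))⁻¹ * ((k : ℝ) * u ^ (k-1)) * c k) n]
        simp only [Nat.cast_zero, zero_mul, mul_zero, zero_add, add_zero,
          Nat.factorial_zero, Nat.cast_add, Nat.cast_one, Nat.add_sub_cancel]
        refine Finset.sum_congr rfl fun k _ => ?_
        rw [Nat.factorial_succ]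
        push_cast
        field_simp
      exact h1.sub h2
    have hbound : ∀ u ∈ Icc (0:ℝ) 1, |F' u| ≤ M * ‖v‖ ^ (n+1) := by
      intro u hu
      have hIH := IH g (M * ‖v‖) hg hgb x (u • v)
      have heq : ∑ k ∈ Finset.range n, ((Nat.factorial k : ℝ))⁻¹ *
            iteratedFDeriv ℝ k g x (fun _ => u • v)
          = ∑ k ∈ Finset.range n, ((Nat.factorial k : ℝ))⁻¹ * u ^ k * c (k+1) := by
        refine Finset.sum_congr rfl fun k hk => ?_
        rw [hgc k (le_of_lt (Finset.mem_range.mp hk)) u]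
        ring
      rw [heq] at hIH
      have : |F' u| ≤ M * ‖v‖ * ‖u • v‖ ^ n := hIH
      refine le_trans this ?_
      rw [norm_smul]
      have hu1 : ‖u‖ ≤ 1 := by
        rw [Real.norm_eq_abs, abs_of_nonneg hu.1]; exact hu.2
      calc M * ‖v‖ * (‖u‖ * ‖v‖) ^ n ≤ M * ‖v‖ * (1 * ‖v‖) ^ n := by
            gcongr
        _ = M * ‖v‖ ^ (n+1) := by ring
    have hF0 : F 0 = 0 := by
      simp only [hF, zero_smul, add_zero]
      rw [Finset.sum_range_succ' (fun k => ((Nat.factorial k : ℝ))⁻¹ * (0:ℝ) ^ k * c k) n]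
      have hc0 : c 0 = f x := by
        simp [hc, iteratedFDeriv_zero_apply]
      simp [hc0]
    have key := norm_image_sub_le_of_norm_deriv_le_segment'
      (f := F) (f' := F') (C := M * ‖v‖ ^ (n+1)) (a := 0) (b := 1)
      (fun u hu => (hderiv u).hasDerivWithinAt)
      (fun u hu => by
        rw [Real.norm_eq_abs]; exact hbound u ⟨hu.1, hu.2.le⟩)
      1 (by norm_num)
    have hF1 : F 1 = f (x + v) - ∑ k ∈ Finset.range (n+1),
        ((Nat.factorial k : ℝ))⁻¹ * iteratedFDeriv ℝ k f x (fun _ => v) := by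
      simp [hF, hc]
    rw [hF0, sub_zero, Real.norm_eq_abs, hF1] at key
    simpa using key
end Taylor


theorem euclid_decomp {d : ℕ} (v : EuclideanSpace ℝ (Fin d)) :
    v = ∑ a : Fin d, v a • EuclideanSpace.single a (1:ℝ) := by
  have h := (EuclideanSpace.basisFun (Fin d) ℝ).sum_repr v
  simp only [EuclideanSpace.basisFun_apply, EuclideanSpace.basisFun_repr] at h
  exact h.symm

theorem expand {d k : ℕ} (D : ContinuousMultilinearMap ℝ (fun _ : Fin k => EuclideanSpace ℝ (Fin d)) ℝ)
    (v : EuclideanSpace ℝ (Fin d)) :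
    D (fun _ => v) = ∑ i : Fin k → Fin d,
      (∏ j, v (i j)) * D (fun j => EuclideanSpace.single (i j) (1:ℝ)) := by
  calc D (fun _ => v)
      = D (fun _ => ∑ a : Fin d, v a • EuclideanSpace.single a (1:ℝ)) := by
        rw [← euclid_decomp v]
    _ = ∑ i : Fin k → Fin d, D (fun j => v (i j) • EuclideanSpace.single (i j) (1:ℝ)) :=
        D.toMultilinearMap.map_sum (g := fun _ a => v a • EuclideanSpace.single a (1:ℝ))
    _ = ∑ i : Fin k → Fin d, (∏ j, v (i j)) * D (fun j => EuclideanSpace.single (i j) (1:ℝ)) := by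
        refine Finset.sum_congr rfl fun i _ => ?_
        rw [D.map_smul_univ (fun j => v (i j)) (fun j => EuclideanSpace.single (i j) (1:ℝ))]
        simp [smul_eq_mul]

open Set

/-- Taylor-shuffle identity for a weakly geometric rough path of order `N = ⌊1/γ⌋`
and `f ∈ C_b^N(ℝ^d)`:
`∑_{k=1}^{N−1} (1/k!) ∑_{i₁…i_k} ∂^k f(x_s) ∏ x¹_{st}(i_j)
  = ∑_{k=1}^{N−1} ∑_{i₁…i_k} ∂^k_{i_k⋯i₁} f(x_s) x^k_{st}(i₁,…,i_k)`,
and consequently `δ(f(x))_{st} = ∑_k ∂^k f(x_s) x^k_{st} + r⁰_{st}` with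
`r⁰ ∈ C₂^{Nγ}`. -/
theorem stmt10 (d N : ℕ) (hN : 1 ≤ N) (T γ : ℝ) (hT : 0 < T)
    (hγ1 : 1 / (N + 1 : ℝ) < γ) (hγ2 : γ ≤ 1 / (N : ℝ))
    (x : ℝ → EuclideanSpace ℝ (Fin d))
    (X : (n : ℕ) → ℝ → ℝ → (Fin n → Fin d) → ℝ)
    -- first level: x¹_{st} = x_t − x_s
    (hX1 : ∀ (s t : ℝ) (i : Fin 1 → Fin d), X 1 s t i = x t (i 0) - x s (i 0))
    -- regularity: x^n ∈ C₂^{nγ}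
    (hXreg : ∀ n, 1 ≤ n → n ≤ N → ∃ C : ℝ, ∀ s ∈ Icc (0 : ℝ) T,
      ∀ t ∈ Icc (0 : ℝ) T, ∀ i : Fin n → Fin d,
        |X n s t i| ≤ C * |t - s| ^ ((n : ℝ) * γ))
    -- geometric shuffle property, in the form ∏_j x¹_{st}(i_j) = ∑_{σ} x^k_{st}(i∘σ)
    (hShuffle : ∀ (k : ℕ) (s t : ℝ) (i : Fin k → Fin d),
      s ∈ Icc (0 : ℝ) T → t ∈ Icc (0 : ℝ) T →
      (∏ j, (x t (i j) - x s (i j))) = ∑ σ : Equiv.Perm (Fin k), X k s t (i ∘ σ))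
    (f : EuclideanSpace ℝ (Fin d) → ℝ) (hf : ContDiff ℝ N f)
    (hfb : ∃ M : ℝ, ∀ k ≤ N, ∀ y, ‖iteratedFDeriv ℝ k f y‖ ≤ M) :
    -- the Taylor-shuffle identity
    (∀ s ∈ Icc (0 : ℝ) T, ∀ t ∈ Icc (0 : ℝ) T,
      (∑ k ∈ Finset.Icc 1 (N - 1), ((Nat.factorial k : ℝ))⁻¹ *
        ∑ i : Fin k → Fin d,
          iteratedFDeriv ℝ k f (x s) (fun j => EuclideanSpace.single (i j) 1) *
            ∏ j, (x t (i j) - x s (i j)))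
      = ∑ k ∈ Finset.Icc 1 (N - 1),
          ∑ i : Fin k → Fin d,
            iteratedFDeriv ℝ k f (x s)
                (fun j => EuclideanSpace.single (i (Fin.rev j)) 1) *
              X k s t i) ∧
    -- the remainder r⁰ is in C₂^{Nγ}
    (∃ C : ℝ, ∀ s ∈ Icc (0 : ℝ) T, ∀ t ∈ Icc (0 : ℝ) T,
      |f (x t) - f (x s) -
        ∑ k ∈ Finset.Icc 1 (N - 1),
          ∑ i : Fin k → Fin d,
            iteratedFDeriv ℝ k f (x s)
                (fun j => EuclideanSpace.single (i (Fin.rev j)) 1) *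
              X k s t i|
        ≤ C * |t - s| ^ ((N : ℝ) * γ)) := by
  classical
  obtain ⟨M, hM⟩ := hfb
  have hM0 : 0 ≤ M := le_trans (norm_nonneg _) (hM 0 (Nat.zero_le N) (x 0))
  -- the per-degree shuffle identity
  have hStep : ∀ k : ℕ, k ≤ N → ∀ s ∈ Icc (0:ℝ) T, ∀ t ∈ Icc (0:ℝ) T,
      ((Nat.factorial k : ℝ))⁻¹ * (∑ i : Fin k → Fin d,
          iteratedFDeriv ℝ k f (x s) (fun j => EuclideanSpace.single (i j) 1) *
            ∏ j, (x t (i j) - x s (i j)))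
        = ∑ i : Fin k → Fin d,
            iteratedFDeriv ℝ k f (x s) (fun j => EuclideanSpace.single (i (Fin.rev j)) 1) *
              X k s t i := by
    intro k hk s hs t ht
    have hfk : ContDiff ℝ (k : ℕ) f := hf.of_le (by exact_mod_cast hk)
    have hrev : ∀ i : Fin k → Fin d,
        iteratedFDeriv ℝ k f (x s) (fun j => EuclideanSpace.single (i (Fin.rev j)) (1:ℝ))
          = iteratedFDeriv ℝ k f (x s) (fun j => EuclideanSpace.single (i j) (1:ℝ)) := by
      intro i
      have hcomp : (fun j => EuclideanSpace.single (i (Fin.rev j)) (1:ℝ))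
          = (fun j => EuclideanSpace.single (i j) (1:ℝ)) ∘ ⇑(Fin.revPerm : Equiv.Perm (Fin k)) := by
        funext j; simp
      rw [hcomp]
      exact iFD_perm k f hfk (x s) Fin.revPerm _
    have hperm : ∀ (σ : Equiv.Perm (Fin k)) (i : Fin k → Fin d),
        iteratedFDeriv ℝ k f (x s) (fun j => EuclideanSpace.single (i (σ j)) (1:ℝ))
          = iteratedFDeriv ℝ k f (x s) (fun j => EuclideanSpace.single (i j) (1:ℝ)) := by
      intro σ i
      exact iFD_perm k f hfk (x s) σ (fun j => EuclideanSpace.single (i j) (1:ℝ))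
    calc ((Nat.factorial k : ℝ))⁻¹ * (∑ i : Fin k → Fin d,
            iteratedFDeriv ℝ k f (x s) (fun j => EuclideanSpace.single (i j) 1) *
              ∏ j, (x t (i j) - x s (i j)))
        = ((Nat.factorial k : ℝ))⁻¹ * ∑ σ : Equiv.Perm (Fin k), ∑ i : Fin k → Fin d,
            iteratedFDeriv ℝ k f (x s) (fun j => EuclideanSpace.single (i j) 1) *
              X k s t (i ∘ σ) := by
          congr 1
          rw [Finset.sum_comm]
          refine Finset.sum_congr rfl fun i _ => ?_
          rw [hShuffle k s t i hs ht, Finset.mul_sum]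
      _ = ((Nat.factorial k : ℝ))⁻¹ * ∑ σ : Equiv.Perm (Fin k), ∑ i : Fin k → Fin d,
            iteratedFDeriv ℝ k f (x s) (fun j => EuclideanSpace.single (i j) 1) *
              X k s t i := by
          congr 1
          refine Finset.sum_congr rfl fun σ _ => ?_
          have hbij := Equiv.sum_comp (Equiv.arrowCongr (σ : Fin k ≃ Fin k) (Equiv.refl (Fin d)))
            (fun i : Fin k → Fin d =>
              iteratedFDeriv ℝ k f (x s) (fun j => EuclideanSpace.single (i j) 1) * X k s t (i ∘ σ))
          rw [← hbij]
          refine Finset.sum_congr rfl fun i _ => ?_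
          have h1 : ((Equiv.arrowCongr (σ : Fin k ≃ Fin k) (Equiv.refl (Fin d))) i) ∘ ⇑σ = i := by
            funext j; simp
          have h2 : ∀ j, ((Equiv.arrowCongr (σ : Fin k ≃ Fin k) (Equiv.refl (Fin d))) i) j
              = i (σ.symm j) := by
            intro j; simp
          rw [h1]
          congr 1
          have h3 : (fun j => EuclideanSpace.single
                (((Equiv.arrowCongr (σ : Fin k ≃ Fin k) (Equiv.refl (Fin d))) i) j) (1:ℝ))
              = fun j => EuclideanSpace.single (i (σ.symm j)) (1:ℝ) := by
            funext j; rw [h2 j]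
          rw [h3, hperm σ.symm i]
      _ = ((Nat.factorial k : ℝ))⁻¹ * ((Nat.factorial k : ℝ) * ∑ i : Fin k → Fin d,
            iteratedFDeriv ℝ k f (x s) (fun j => EuclideanSpace.single (i j) 1) * X k s t i) := by
          rw [Finset.sum_const, Finset.card_univ, Fintype.card_perm, Fintype.card_fin,
            nsmul_eq_mul]
      _ = ∑ i : Fin k → Fin d,
            iteratedFDeriv ℝ k f (x s) (fun j => EuclideanSpace.single (i (Fin.rev j)) 1) *
              X k s t i := by
          rw [← mul_assoc, inv_mul_cancel₀ (by exact_mod_cast Nat.factorial_ne_zero k), one_mul]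
          exact (Finset.sum_congr rfl fun i _ => by rw [hrev i]).symm
  constructor
  · intro s hs t ht
    refine Finset.sum_congr rfl fun k hk => ?_
    have hkN : k ≤ N := by
      have := (Finset.mem_Icc.mp hk).2; omega
    exact hStep k hkN s hs t ht
  -- remainder estimate
  obtain ⟨C1, hC1⟩ := hXreg 1 le_rfl hN
  set C1' := max C1 0 with hC1'
  have hC1'0 : (0:ℝ) ≤ C1' := le_max_right _ _
  refine ⟨M * (Real.sqrt d * C1') ^ N, ?_⟩
  intro s hs t ht
  set v : EuclideanSpace ℝ (Fin d) := x t - x s with hv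
  have hxt : x t = x s + v := by rw [hv]; abel
  have hsub : ∀ a : Fin d, v a = x t a - x s a := by
    intro a; rw [hv]; rfl
  have hsum : (∑ k ∈ Finset.Icc 1 (N-1), ∑ i : Fin k → Fin d,
        iteratedFDeriv ℝ k f (x s) (fun j => EuclideanSpace.single (i (Fin.rev j)) 1) *
          X k s t i)
      = ∑ k ∈ Finset.Icc 1 (N-1),
          ((Nat.factorial k : ℝ))⁻¹ * iteratedFDeriv ℝ k f (x s) (fun _ => v) := by
    refine Finset.sum_congr rfl fun k hk => ?_
    have hkN : k ≤ N := by have := (Finset.mem_Icc.mp hk).2; omega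
    rw [← hStep k hkN s hs t ht]
    congr 1
    calc (∑ i : Fin k → Fin d,
          iteratedFDeriv ℝ k f (x s) (fun j => EuclideanSpace.single (i j) 1) *
            ∏ j, (x t (i j) - x s (i j)))
        = ∑ i : Fin k → Fin d, (∏ j, v (i j)) *
            iteratedFDeriv ℝ k f (x s) (fun j => EuclideanSpace.single (i j) 1) := by
          refine Finset.sum_congr rfl fun i _ => ?_
          rw [mul_comm]
          simp only [hsub]
      _ = iteratedFDeriv ℝ k f (x s) (fun _ => v) :=
          (expand (iteratedFDeriv ℝ k f (x s)) v).symm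
  have htay := taylor_bound_aux N f M hf hM (x s) v
  have hrange : Finset.range N = insert 0 (Finset.Icc 1 (N-1)) := by
    ext k
    simp only [Finset.mem_range, Finset.mem_insert, Finset.mem_Icc]
    omega
  have h0notin : (0:ℕ) ∉ Finset.Icc 1 (N-1) := by simp
  rw [hrange, Finset.sum_insert h0notin] at htay
  have h00 : ((Nat.factorial 0:ℝ))⁻¹ *
      iteratedFDeriv ℝ 0 f (x s) (fun _ : Fin 0 => v) = f (x s) := by
    simp
  rw [h00] at htay
  rw [hsum, hxt]
  have hgoal : |f (x s + v) - f (x s) - ∑ k ∈ Finset.Icc 1 (N-1),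
      ((Nat.factorial k : ℝ))⁻¹ * iteratedFDeriv ℝ k f (x s) (fun _ => v)| ≤ M * ‖v‖ ^ N := by
    rw [sub_sub]
    exact htay
  refine le_trans hgoal ?_
  -- bound on ‖v‖
  have hva : ∀ a : Fin d, |v a| ≤ C1' * |t - s| ^ γ := by
    intro a
    have h1 := hC1 s hs t ht (fun _ => a)
    rw [hX1 s t (fun _ => a)] at h1
    rw [hsub a]
    calc |x t a - x s a| ≤ C1 * |t - s| ^ (((1:ℕ):ℝ) * γ) := h1
      _ = C1 * |t - s| ^ γ := by norm_num
      _ ≤ C1' * |t - s| ^ γ := by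
          have := Real.rpow_nonneg (abs_nonneg (t - s)) γ
          gcongr
          exact le_max_left _ _
  have hnv : ‖v‖ ≤ Real.sqrt d * (C1' * |t - s| ^ γ) := by
    have hB0 : (0:ℝ) ≤ C1' * |t - s| ^ γ := by
      have := Real.rpow_nonneg (abs_nonneg (t - s)) γ
      positivity
    rw [EuclideanSpace.norm_eq]
    have hsumsq : ∑ a, ‖v a‖^2 ≤ (d:ℝ) * (C1' * |t - s| ^ γ)^2 := by
      calc ∑ a, ‖v a‖^2 ≤ ∑ _a : Fin d, (C1' * |t - s| ^ γ)^2 := by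
            refine Finset.sum_le_sum fun a _ => ?_
            rw [Real.norm_eq_abs]
            exact pow_le_pow_left₀ (abs_nonneg _) (hva a) 2
        _ = (d:ℝ) * (C1' * |t - s| ^ γ)^2 := by
            rw [Finset.sum_const, Finset.card_univ, Fintype.card_fin, nsmul_eq_mul]
    calc Real.sqrt (∑ a, ‖v a‖^2)
        ≤ Real.sqrt ((d:ℝ) * (C1' * |t - s| ^ γ)^2) := Real.sqrt_le_sqrt hsumsq
      _ = Real.sqrt d * (C1' * |t - s| ^ γ) := by
          rw [Real.sqrt_mul (Nat.cast_nonneg d), Real.sqrt_sq hB0]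
  have hvN : ‖v‖^N ≤ (Real.sqrt d * C1')^N * |t - s| ^ ((N:ℝ)*γ) := by
    have h1 : ‖v‖^N ≤ (Real.sqrt d * (C1' * |t - s| ^ γ))^N :=
      pow_le_pow_left₀ (norm_nonneg _) hnv N
    refine le_trans h1 (le_of_eq ?_)
    rw [show Real.sqrt d * (C1' * |t - s| ^ γ) = (Real.sqrt d * C1') * |t - s| ^ γ from by ring]
    rw [mul_pow]
    congr 1
    rw [← Real.rpow_natCast (|t - s| ^ γ) N, ← Real.rpow_mul (abs_nonneg _), mul_comm γ (N:ℝ)]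
  calc M * ‖v‖ ^ N ≤ M * ((Real.sqrt d * C1')^N * |t - s| ^ ((N:ℝ)*γ)) :=
        mul_le_mul_of_nonneg_left hvN hM0
    _ = M * (Real.sqrt d * C1')^N * |t - s| ^ ((N:ℝ)*γ) := by ring
end
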